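/- If a is a positive integer with exactly i distinct prime factors, and N_i = p_1 p_2 ⋯ p_i is the product of the first i primes, then φ̃(N_i) ≤ φ̃(a). -/
import Mathlib

/-- φ̃(n): number of m with 1 ≤ m ≤ n, gcd(m,n)=1, m not prime. -/
def phiT (n : ℕ) : ℕ :=
  ((Finset.Icc 1 n).filter (fun m => Nat.gcd m n = 1 ∧ ¬ m.Prime)).card

/-- The product of the first k primes. -/
noncomputable def primorialN (k : ℕ) : ℕ := ∏ i ∈ Finset.range k, Nat.nth Nat.Prime i

/-- Count of m in [1,x] avoiding all primes in S and not prime. -/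
def FF (S : Finset ℕ) (x : ℕ) : ℕ :=
  ((Finset.Icc 1 x).filter (fun m => (∀ p ∈ S, ¬ p ∣ m) ∧ ¬ m.Prime)).card

lemma coprime_iff_noDvd {n : ℕ} (hn : n ≠ 0) (m : ℕ) :
    Nat.gcd m n = 1 ↔ ∀ p ∈ n.primeFactors, ¬ p ∣ m := by
  constructor
  · intro h p hp hpm
    have hpn := Nat.dvd_of_mem_primeFactors hp
    have hp' := Nat.prime_of_mem_primeFactors hp
    have hd : p ∣ Nat.gcd m n := Nat.dvd_gcd hpm hpn
    rw [h] at hd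
    exact hp'.one_lt.ne' (Nat.eq_one_of_dvd_one hd)
  · intro h
    by_contra hg
    obtain ⟨p, hp, hpd⟩ := Nat.exists_prime_and_dvd hg
    exact h p (Nat.mem_primeFactors.mpr ⟨hp, hpd.trans (Nat.gcd_dvd_right m n), hn⟩)
      (hpd.trans (Nat.gcd_dvd_left m n))

lemma phiT_eq {n : ℕ} (hn : 0 < n) : phiT n = FF n.primeFactors n := by
  unfold phiT FF
  congr 1
  apply Finset.filter_congr
  intro m _
  simp only [coprime_iff_noDvd hn.ne' m]

lemma FF_mono (S : Finset ℕ) {x y : ℕ} (h : x ≤ y) : FF S x ≤ FF S y := by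
  apply Finset.card_le_card
  intro m hm
  simp only [Finset.mem_filter, Finset.mem_Icc] at hm ⊢
  exact ⟨⟨hm.1.1, hm.1.2.trans h⟩, hm.2⟩

lemma count_mult (S : Finset ℕ) (hS : ∀ s ∈ S, s.Prime) {r : ℕ} (hr : r.Prime)
    (hrS : r ∉ S) (x : ℕ) :
    ((((Finset.Icc 1 x).filter (fun m => (∀ p ∈ S, ¬ p ∣ m) ∧ ¬ m.Prime)).filter
      (fun m => r ∣ m)).card)
    = ((Finset.Icc 2 (x / r)).filter (fun t => ∀ p ∈ S, ¬ p ∣ t)).card := by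
  apply Finset.card_bij' (fun m _ => m / r) (fun t _ => r * t)
  · intro m hm
    simp only [Finset.mem_filter, Finset.mem_Icc] at hm ⊢
    obtain ⟨⟨⟨hm1, hmx⟩, hnd, hnp⟩, hrd⟩ := hm
    obtain ⟨t, rfl⟩ := hrd
    rw [Nat.mul_div_cancel_left t hr.pos]
    refine ⟨⟨?_, ?_⟩, ?_⟩
    · rcases Nat.lt_or_ge t 2 with h | h
      · interval_cases t
        · omega
        · exact absurd hr (by simpa using hnp)
      · exact h
    · calc t = r * t / r := (Nat.mul_div_cancel_left t hr.pos).symm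
        _ ≤ x / r := Nat.div_le_div_right hmx
    · intro p hp hpt
      exact hnd p hp (hpt.mul_left r)
  · intro t ht
    simp only [Finset.mem_filter, Finset.mem_Icc] at ht ⊢
    obtain ⟨⟨ht2, htx⟩, hnd⟩ := ht
    refine ⟨⟨⟨?_, ?_⟩, ?_, ?_⟩, ⟨t, rfl⟩⟩
    · exact Nat.one_le_iff_ne_zero.mpr (Nat.mul_ne_zero hr.pos.ne' (by omega))
    · calc r * t = t * r := Nat.mul_comm r t
        _ ≤ x := (Nat.le_div_iff_mul_le hr.pos).mp htx
    · intro p hp hpd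
      have hpp := hS p hp
      rcases (Nat.Prime.dvd_mul hpp).mp hpd with h | h
      · exact hrS (((Nat.prime_dvd_prime_iff_eq hpp hr).mp h) ▸ hp)
      · exact (hnd p hp) h
    · intro hprime
      rcases hprime.eq_one_or_self_of_dvd r ⟨t, rfl⟩ with h | h
      · exact hr.one_lt.ne' h
      · have h2 : r * 2 ≤ r * t := Nat.mul_le_mul_left r ht2
        have := hr.two_le
        omega
  · intro m hm
    simp only [Finset.mem_filter] at hm
    exact Nat.mul_div_cancel' hm.2
  · intro t _
    exact Nat.mul_div_cancel_left t hr.pos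

lemma FF_swap (S : Finset ℕ) (hS : ∀ s ∈ S, s.Prime) {p q : ℕ} (hp : p.Prime)
    (hq : q.Prime) (hpq : p ≤ q) (hpS : p ∉ S) (hqS : q ∉ S) (x : ℕ) :
    FF (insert p S) x ≤ FF (insert q S) x := by
  classical
  set A := (Finset.Icc 1 x).filter (fun m => (∀ s ∈ S, ¬ s ∣ m) ∧ ¬ m.Prime) with hA
  have key : ∀ r : ℕ, FF (insert r S) x = (A.filter (fun m => ¬ r ∣ m)).card := by
    intro r
    unfold FF
    rw [hA, Finset.filter_filter]
    congr 1
    apply Finset.filter_congr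
    intro m _
    simp only [Finset.forall_mem_insert]
    tauto
  have split : ∀ r : ℕ, (A.filter (fun m => r ∣ m)).card
      + (A.filter (fun m => ¬ r ∣ m)).card = A.card := fun r =>
    Finset.card_filter_add_card_filter_not (fun m => r ∣ m)
  have hmq := count_mult S hS hq hqS x
  have hmp := count_mult S hS hp hpS x
  rw [← hA] at hmq hmp
  have hsub : ((Finset.Icc 2 (x / q)).filter (fun t => ∀ s ∈ S, ¬ s ∣ t)).card
      ≤ ((Finset.Icc 2 (x / p)).filter (fun t => ∀ s ∈ S, ¬ s ∣ t)).card := by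
    apply Finset.card_le_card
    apply Finset.filter_subset_filter
    exact Finset.Icc_subset_Icc_right (Nat.div_le_div_left hpq hp.pos)
  have h1 := split p
  have h2 := split q
  rw [key p, key q]
  omega

lemma nth_succ_le {j r : ℕ} (hr : r.Prime) (h : Nat.nth Nat.Prime j < r) :
    Nat.nth Nat.Prime (j + 1) ≤ r := by
  have hinf := Nat.infinite_setOf_prime
  have h1 : Nat.nth Nat.Prime (Nat.count Nat.Prime r) = r := Nat.nth_count hr
  have h2 : j < Nat.count Nat.Prime r := by
    rw [← h1] at h
    exact (Nat.nth_lt_nth hinf).mp h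
  calc Nat.nth Nat.Prime (j + 1) ≤ Nat.nth Nat.Prime (Nat.count Nat.Prime r) :=
        (Nat.nth_le_nth hinf).mpr h2
    _ = r := h1

lemma nth_zero_le_prime {r : ℕ} (hr : r.Prime) : Nat.nth Nat.Prime 0 ≤ r := by
  rw [Nat.nth_prime_zero_eq_two]
  exact hr.two_le

lemma image_range_succ_nth (j k : ℕ) :
    (Finset.range (k + 1)).image (fun t => Nat.nth Nat.Prime (j + t))
    = insert (Nat.nth Nat.Prime j)
        ((Finset.range k).image (fun t => Nat.nth Nat.Prime (j + 1 + t))) := by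
  ext y
  simp only [Finset.mem_image, Finset.mem_range, Finset.mem_insert]
  constructor
  · rintro ⟨t, ht, rfl⟩
    cases t with
    | zero => left; simp
    | succ t =>
      right
      exact ⟨t, by omega, by rw [show j + 1 + t = j + (t + 1) by omega]⟩
  · rintro (rfl | ⟨t, ht, rfl⟩)
    · exact ⟨0, by omega, by simp⟩
    · exact ⟨t + 1, by omega, by rw [show j + (t + 1) = j + 1 + t by omega]⟩

lemma FF_main : ∀ (k j x : ℕ) (E Q : Finset ℕ), (∀ e ∈ E, e.Prime) →
    (∀ e ∈ E, e < Nat.nth Nat.Prime j) → (∀ q ∈ Q, q.Prime) → Q.card = k →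
    (∀ q ∈ Q, Nat.nth Nat.Prime j ≤ q) →
    FF (E ∪ (Finset.range k).image (fun t => Nat.nth Nat.Prime (j + t))) x
      ≤ FF (E ∪ Q) x := by
  intro k
  induction k with
  | zero =>
    intro j x E Q hE hElt hQ hcard hQge
    rw [Finset.card_eq_zero.mp hcard]
    simp
  | succ k IH =>
    intro j x E Q hE hElt hQ hcard hQge
    classical
    have hne : Q.Nonempty := Finset.card_pos.mp (by omega)
    set q := Q.min' hne with hqdef
    have hqQ : q ∈ Q := Q.min'_mem hne
    have hq : q.Prime := hQ q hqQ
    set Q' := Q.erase q with hQ'def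
    have hcard' : Q'.card = k := by rw [hQ'def, Finset.card_erase_of_mem hqQ, hcard]; omega
    have hQ'gt : ∀ r ∈ Q', q < r := fun r hr =>
      lt_of_le_of_ne (Q.min'_le r (Finset.mem_of_mem_erase hr))
        (Ne.symm (Finset.ne_of_mem_erase hr))
    have hQ'prime : ∀ r ∈ Q', r.Prime := fun r hr => hQ r (Finset.mem_of_mem_erase hr)
    have hQ'ge : ∀ r ∈ Q', Nat.nth Nat.Prime (j + 1) ≤ r := fun r hr =>
      nth_succ_le (hQ'prime r hr) (lt_of_le_of_lt (hQge q hqQ) (hQ'gt r hr))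
    have hinf := Nat.infinite_setOf_prime
    have hjj : Nat.nth Nat.Prime j < Nat.nth Nat.Prime (j + 1) :=
      (Nat.nth_lt_nth hinf).mpr (by omega)
    have hnthj : (Nat.nth Nat.Prime j).Prime := Nat.prime_nth_prime j
    have hjq : Nat.nth Nat.Prime j ≤ q := hQge q hqQ
    have hS : ∀ s ∈ E ∪ Q', s.Prime := by
      intro s hs
      rcases Finset.mem_union.mp hs with h | h
      · exact hE s h
      · exact hQ'prime s h
    have hpS : Nat.nth Nat.Prime j ∉ E ∪ Q' := by
      intro hmem
      rcases Finset.mem_union.mp hmem with h | h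
      · exact absurd (hElt _ h) (lt_irrefl _)
      · exact absurd (hQ'ge _ h) (by omega)
    have hqS : q ∉ E ∪ Q' := by
      intro hmem
      rcases Finset.mem_union.mp hmem with h | h
      · have := hElt _ h; omega
      · exact Finset.notMem_erase q Q h
    calc FF (E ∪ (Finset.range (k + 1)).image (fun t => Nat.nth Nat.Prime (j + t))) x
        = FF ((insert (Nat.nth Nat.Prime j) E)
            ∪ (Finset.range k).image (fun t => Nat.nth Nat.Prime (j + 1 + t))) x := by
          rw [image_range_succ_nth, Finset.union_insert, Finset.insert_union]
      _ ≤ FF ((insert (Nat.nth Nat.Prime j) E) ∪ Q') x := by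
          apply IH (j + 1) x (insert (Nat.nth Nat.Prime j) E) Q'
          · intro e he
            rcases Finset.mem_insert.mp he with rfl | h
            · exact hnthj
            · exact hE e h
          · intro e he
            rcases Finset.mem_insert.mp he with rfl | h
            · exact hjj
            · exact lt_trans (hElt e h) hjj
          · exact hQ'prime
          · exact hcard'
          · exact hQ'ge
      _ = FF (insert (Nat.nth Nat.Prime j) (E ∪ Q')) x := by rw [Finset.insert_union]
      _ ≤ FF (insert q (E ∪ Q')) x := FF_swap (E ∪ Q') hS hnthj hq hjq hpS hqS x
      _ = FF (E ∪ Q) x := by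
          rw [← Finset.union_insert, hQ'def, Finset.insert_erase hqQ]

lemma prod_main : ∀ (k j : ℕ) (Q : Finset ℕ), (∀ q ∈ Q, q.Prime) → Q.card = k →
    (∀ q ∈ Q, Nat.nth Nat.Prime j ≤ q) →
    ∏ t ∈ Finset.range k, Nat.nth Nat.Prime (j + t) ≤ ∏ q ∈ Q, q := by
  intro k
  induction k with
  | zero =>
    intro j Q hQ hcard hQge
    rw [Finset.card_eq_zero.mp hcard]
    simp
  | succ k IH =>
    intro j Q hQ hcard hQge
    classical
    have hne : Q.Nonempty := Finset.card_pos.mp (by omega)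
    set q := Q.min' hne with hqdef
    have hqQ : q ∈ Q := Q.min'_mem hne
    set Q' := Q.erase q with hQ'def
    have hcard' : Q'.card = k := by rw [hQ'def, Finset.card_erase_of_mem hqQ, hcard]; omega
    have hQ'gt : ∀ r ∈ Q', q < r := fun r hr =>
      lt_of_le_of_ne (Q.min'_le r (Finset.mem_of_mem_erase hr))
        (Ne.symm (Finset.ne_of_mem_erase hr))
    have hQ'prime : ∀ r ∈ Q', r.Prime := fun r hr => hQ r (Finset.mem_of_mem_erase hr)
    have hQ'ge : ∀ r ∈ Q', Nat.nth Nat.Prime (j + 1) ≤ r := fun r hr =>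
      nth_succ_le (hQ'prime r hr) (lt_of_le_of_lt (hQge q hqQ) (hQ'gt r hr))
    have hL : ∏ t ∈ Finset.range (k + 1), Nat.nth Nat.Prime (j + t)
        = (∏ t ∈ Finset.range k, Nat.nth Nat.Prime (j + 1 + t)) * Nat.nth Nat.Prime j := by
      rw [Finset.prod_range_succ']
      congr 1
      · apply Finset.prod_congr rfl
        intro t _
        rw [show j + (t + 1) = j + 1 + t by omega]
    have hR : ∏ x ∈ Q, x = q * ∏ x ∈ Q', x := by
      exact (Finset.mul_prod_erase Q (fun x => x) hqQ).symm
    rw [hL, hR, Nat.mul_comm]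
    exact Nat.mul_le_mul (hQge q hqQ) (IH (j + 1) Q' hQ'prime hcard' hQ'ge)

theorem stmt5 (a i : ℕ) (ha : 0 < a) (hω : a.primeFactors.card = i) :
    phiT (primorialN i) ≤ phiT a := by
  classical
  have hprimes : ∀ t : ℕ, (Nat.nth Nat.Prime t).Prime := Nat.prime_nth_prime
  have hinf := Nat.infinite_setOf_prime
  have haQ : ∀ q ∈ a.primeFactors, q.Prime := fun q hq => Nat.prime_of_mem_primeFactors hq
  have haQge : ∀ q ∈ a.primeFactors, Nat.nth Nat.Prime 0 ≤ q := fun q hq =>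
    nth_zero_le_prime (haQ q hq)
  have hNimg : primorialN i = ∏ p ∈ (Finset.range i).image (fun t => Nat.nth Nat.Prime t), p := by
    rw [Finset.prod_image]
    · rfl
    · intro x _ y _ h
      exact Nat.nth_injective hinf h
  have hNfac : (primorialN i).primeFactors
      = (Finset.range i).image (fun t => Nat.nth Nat.Prime t) := by
    rw [hNimg, Nat.primeFactors_prod]
    intro p hp
    obtain ⟨t, _, rfl⟩ := Finset.mem_image.mp hp
    exact hprimes t
  have hN1 : 0 < primorialN i := Finset.prod_pos fun t _ => (hprimes t).pos
  have hNlea : primorialN i ≤ a := by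
    have h1 : ∏ p ∈ a.primeFactors, p ∣ a := Nat.prod_primeFactors_dvd a
    have h2 := prod_main i 0 a.primeFactors haQ hω haQge
    simp only [Nat.zero_add] at h2
    exact le_trans h2 (Nat.le_of_dvd ha h1)
  rw [phiT_eq hN1, phiT_eq ha, hNfac]
  have hmain := FF_main i 0 (primorialN i) ∅ a.primeFactors (by simp) (by simp)
    haQ hω haQge
  simp only [Nat.zero_add, Finset.empty_union] at hmain
  exact le_trans hmain (FF_mono a.primeFactors hNlea)
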